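/- Let G be a second countable locally compact Hausdorff topological group with a right Haar measure ϑ, let 1 ≤ p < ∞, let g ∈ G and let w be a weight on G such that 1/w is also bounded. If liminf_{k→∞} ‖k (∏_{i=0}^{k−1} (w ∗ δ_{g^{i}}))^{−1}‖_∞ = 0, then the operator I − T_{g,w} on L^p(G, ϑ) is injective, i.e. the only f ∈ L^p(G, ϑ) with T_{g,w} f = f is f = 0. -/

import Mathlib

open MeasureTheory Filter
open scoped ENNReal

/-- Let `w` be a weight with `1/w` bounded. If
`liminf_k ‖k (∏_{i=0}^{k-1} (w ∗ δ_{g^i}))⁻¹‖_∞ = 0`, then `I - T_{g,w}` is injective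
on `L^p(G,ϑ)`: the only `f` with `T_{g,w} f = f` is `f = 0`. -/
theorem stmt_7
    {G : Type*} [Group G] [TopologicalSpace G] [IsTopologicalGroup G] [T2Space G]
    [LocallyCompactSpace G] [SecondCountableTopology G]
    [MeasurableSpace G] [BorelSpace G]
    (ϑ : Measure G) [ϑ.IsMulRightInvariant] [ϑ.Regular] [ϑ.IsOpenPosMeasure]
    (p : ℝ≥0∞) [Fact (1 ≤ p)] (hp : p ≠ ∞)
    (g : G)
    (w : G → ℝ) (hw_meas : Measurable w) (hw_pos : ∀ x, 0 < w x)
    (hw_bdd : ∃ C : ℝ, ∀ x, w x ≤ C)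
    (hw_inv_bdd : ∃ C : ℝ, ∀ x, (w x)⁻¹ ≤ C)
    (T : Lp ℂ p ϑ →L[ℂ] Lp ℂ p ϑ)
    (hT : ∀ f : Lp ℂ p ϑ, (T f : G → ℂ) =ᵐ[ϑ] fun x => (w x : ℂ) * f (x * g⁻¹))
    (h2 : Filter.liminf (fun k : ℕ =>
      eLpNorm (fun x : G => (k : ℝ) * (∏ i ∈ Finset.range k, w (x * (g ^ i)⁻¹))⁻¹) ∞ ϑ)
      Filter.atTop = 0) :
    ∀ f : Lp ℂ p ϑ, T f = f → f = 0 := by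
  intro f hf
  -- f is a fixed point: f x = w x * f (x * g⁻¹) a.e.
  have hfix : ∀ᵐ x ∂ϑ, (f : G → ℂ) x = (w x : ℂ) * f (x * g⁻¹) := by
    have := hT f
    rw [hf] at this
    exact this
  -- iterate
  have hiter : ∀ k : ℕ, ∀ᵐ x ∂ϑ, (f : G → ℂ) x =
      ((∏ i ∈ Finset.range k, w (x * (g ^ i)⁻¹) : ℝ) : ℂ) * f (x * (g ^ k)⁻¹) := by
    intro k
    induction k with
    | zero => filter_upwards with x; simp
    | succ k ih =>
      have hmp := (measurePreserving_mul_right ϑ (g ^ k)⁻¹).quasiMeasurePreserving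
      have h1 : ∀ᵐ x ∂ϑ, (f : G → ℂ) (x * (g ^ k)⁻¹) =
          (w (x * (g ^ k)⁻¹) : ℂ) * f (x * (g ^ k)⁻¹ * g⁻¹) := hmp.ae hfix
      filter_upwards [ih, h1] with x hx h1x
      have hxg : x * (g ^ k)⁻¹ * g⁻¹ = x * (g ^ (k + 1))⁻¹ := by
        rw [mul_assoc, ← mul_inv_rev, ← pow_succ']
      rw [hx, h1x, hxg, Finset.prod_range_succ]
      push_cast
      ring
  -- pick a good k ≥ 2
  have hfreq : ∃ᶠ k : ℕ in atTop, eLpNorm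
      (fun x : G => (k : ℝ) * (∏ i ∈ Finset.range k, w (x * (g ^ i)⁻¹))⁻¹) ∞ ϑ < 1 := by
    refine Filter.frequently_lt_of_liminf_lt (by isBoundedDefault) ?_
    rw [h2]
    exact zero_lt_one
  obtain ⟨k, hk1, hk2⟩ := (hfreq.and_eventually (eventually_ge_atTop 2)).exists
  -- a.e. the product is ≥ k
  have hprod : ∀ᵐ x ∂ϑ, (k : ℝ) ≤ ∏ i ∈ Finset.range k, w (x * (g ^ i)⁻¹) := by
    have hle := ae_le_eLpNormEssSup
      (f := fun x : G => (k : ℝ) * (∏ i ∈ Finset.range k, w (x * (g ^ i)⁻¹))⁻¹) (μ := ϑ)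
    rw [eLpNorm_exponent_top] at hk1
    filter_upwards [hle] with x hx
    have hlt : (‖(k : ℝ) * (∏ i ∈ Finset.range k, w (x * (g ^ i)⁻¹))⁻¹‖₊ : ℝ≥0∞) < 1 :=
      lt_of_le_of_lt hx hk1
    have hP : (0 : ℝ) < ∏ i ∈ Finset.range k, w (x * (g ^ i)⁻¹) :=
      Finset.prod_pos fun i _ => hw_pos _
    have hlt' : ‖(k : ℝ) * (∏ i ∈ Finset.range k, w (x * (g ^ i)⁻¹))⁻¹‖ < 1 := by
      have := (ENNReal.coe_lt_one_iff.mp hlt)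
      exact_mod_cast this
    rw [Real.norm_eq_abs, abs_of_nonneg (by positivity)] at hlt'
    have h3 := mul_le_mul_of_nonneg_right hlt'.le hP.le
    rw [mul_assoc, inv_mul_cancel₀ hP.ne', mul_one, one_mul] at h3
    exact h3
  -- conclude: k * ‖f‖ ≤ ‖f‖
  set N := eLpNorm (f : G → ℂ) p ϑ with hN
  have hkey : (k : ℝ≥0∞) * N ≤ N := by
    have hmono : eLpNorm (fun x : G => ((k : ℕ) : ℂ) * (f : G → ℂ) (x * (g ^ k)⁻¹)) p ϑ ≤ N := by
      apply eLpNorm_mono_ae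
      filter_upwards [hiter k, hprod] with x hx hPx
      have hP : (0 : ℝ) < ∏ i ∈ Finset.range k, w (x * (g ^ i)⁻¹) :=
        Finset.prod_pos fun i _ => hw_pos _
      rw [hx]
      simp only [norm_mul, Complex.norm_natCast, Complex.norm_real, Real.norm_eq_abs,
        abs_of_pos hP]
      exact mul_le_mul_of_nonneg_right hPx (norm_nonneg _)
    have hcomp : eLpNorm ((f : G → ℂ) ∘ (fun x => x * (g ^ k)⁻¹)) p ϑ = N :=
      eLpNorm_comp_measurePreserving (Lp.aestronglyMeasurable f)
        (measurePreserving_mul_right ϑ (g ^ k)⁻¹)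
    have heq : (fun x : G => ((k : ℕ) : ℂ) * (f : G → ℂ) (x * (g ^ k)⁻¹)) =
        ((k : ℕ) : ℂ) • ((f : G → ℂ) ∘ (fun x => x * (g ^ k)⁻¹)) := by
      funext x; simp [Function.comp]
    calc (k : ℝ≥0∞) * N = (‖((k : ℕ) : ℂ)‖₊ : ℝ≥0∞) * N := by
          norm_num
      _ = eLpNorm (((k : ℕ) : ℂ) • ((f : G → ℂ) ∘ (fun x => x * (g ^ k)⁻¹))) p ϑ := by
          rw [eLpNorm_const_smul, hcomp, enorm_eq_nnnorm]
      _ = eLpNorm (fun x : G => ((k : ℕ) : ℂ) * (f : G → ℂ) (x * (g ^ k)⁻¹)) p ϑ := by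
          rw [heq]
      _ ≤ N := hmono
  have hNtop : N ≠ ∞ := Lp.eLpNorm_ne_top f
  have hN0 : N = 0 := by
    by_contra hne
    have h2N : 2 * N ≤ N := le_trans (mul_le_mul_left (by exact_mod_cast hk2) N) hkey
    rw [two_mul] at h2N
    have : N ≤ 0 := by
      have h2N' : N + N ≤ N + 0 := by simpa using h2N
      exact (ENNReal.add_le_add_iff_left hNtop).mp h2N'
    exact hne (le_antisymm this zero_le)
  have : ‖f‖ = 0 := by
    rw [Lp.norm_def, ← hN, hN0]
    simp
  exact norm_eq_zero.mp this
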